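/- arXiv:1607.08748 — 8 statements merged into one kernel-verified Lean document; each statement's English description precedes it below -/
import Mathlib

section
/- For all ε_x, ε_y in (-1,1), the quantity Tr·B = ((3 - ε_x ε_y)² - 9(ε_x + ε_y)²)/16 lies in the open interval (-2, 1), where Tr = (-3 - 3ε_x - 3ε_y + ε_x ε_y)/4 and B = (-3 + 3ε_x + 3ε_y + ε_x ε_y)/4. -/
theorem stmt0 (εx εy : ℝ) (hx : εx ∈ Set.Ioo (-1 : ℝ) 1) (hy : εy ∈ Set.Ioo (-1 : ℝ) 1) :
    ((-3 - 3*εx - 3*εy + εx*εy)/4) * ((-3 + 3*εx + 3*εy + εx*εy)/4)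
      = ((3 - εx*εy)^2 - 9*(εx + εy)^2)/16 ∧
    -2 < ((3 - εx*εy)^2 - 9*(εx + εy)^2)/16 ∧
    ((3 - εx*εy)^2 - 9*(εx + εy)^2)/16 < 1 := by
  obtain ⟨hx1, hx2⟩ := hx
  obtain ⟨hy1, hy2⟩ := hy
  refine ⟨by ring, ?_, ?_⟩
  · nlinarith [mul_pos (sub_pos.2 hx2) (sub_pos.2 hy2), mul_pos (by linarith : (0:ℝ) < εx + 1) (by linarith : (0:ℝ) < εy + 1), sq_nonneg (εx + εy), sq_nonneg (εx - εy), sq_nonneg (εx*εy)]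
  · nlinarith [mul_pos (sub_pos.2 hx2) (sub_pos.2 hy2), mul_pos (by linarith : (0:ℝ) < εx + 1) (by linarith : (0:ℝ) < εy + 1), sq_nonneg (εx + εy), mul_pos (by linarith : (0:ℝ) < 1 - εx) (by linarith : (0:ℝ) < εy + 1), mul_pos (by linarith : (0:ℝ) < εx + 1) (by linarith : (0:ℝ) < 1 - εy), mul_pos (mul_pos (by linarith : (0:ℝ) < 1 - εx) (by linarith : (0:ℝ) < 1 - εy)) (mul_pos (by linarith : (0:ℝ) < εx + 1) (by linarith : (0:ℝ) < εy + 1))]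
end

section
/- Let ε_x, ε_y ∈ (-1,1) and consider the cubic p(λ) = -λ³ + Tr·λ² - B·λ + 1 with Tr = (-3 - 3ε_x - 3ε_y + ε_x ε_y)/4 and B = (-3 + 3ε_x + 3ε_y + ε_x ε_y)/4. Then p has exactly one real root and two non-real complex conjugate roots. -/
set_option maxHeartbeats 2000000 in
theorem stmt1 (εx εy : ℝ) (hx : εx ∈ Set.Ioo (-1 : ℝ) 1) (hy : εy ∈ Set.Ioo (-1 : ℝ) 1) :
    (∃! x : ℝ, -x^3 + ((-3 - 3*εx - 3*εy + εx*εy)/4) * x^2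
        - ((-3 + 3*εx + 3*εy + εx*εy)/4) * x + 1 = 0) ∧
    (∃ z : ℂ, z.im ≠ 0 ∧
      -z^3 + (((-3 - 3*εx - 3*εy + εx*εy)/4 : ℝ) : ℂ) * z^2
        - (((-3 + 3*εx + 3*εy + εx*εy)/4 : ℝ) : ℂ) * z + 1 = 0 ∧
      -(starRingEnd ℂ z)^3 + (((-3 - 3*εx - 3*εy + εx*εy)/4 : ℝ) : ℂ) * (starRingEnd ℂ z)^2
        - (((-3 + 3*εx + 3*εy + εx*εy)/4 : ℝ) : ℂ) * (starRingEnd ℂ z) + 1 = 0) := by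
  obtain ⟨hx1, hx2⟩ := hx
  obtain ⟨hy1, hy2⟩ := hy
  have p1 : (0:ℝ) < (1-εx)*(1-εy) := mul_pos (by linarith) (by linarith)
  have p2 : (0:ℝ) < (1+εx)*(1+εy) := mul_pos (by linarith) (by linarith)
  have p3 : (0:ℝ) < (1-εx)*(1+εy) := mul_pos (by linarith) (by linarith)
  have p4 : (0:ℝ) < (1+εx)*(1-εy) := mul_pos (by linarith) (by linarith)
  have hq1 : -1 < εx*εy := by nlinarith
  have hq2 : εx*εy < 1 := by nlinarith
  -- real root by IVT
  have hcont : Continuous fun t : ℝ => -t^3 + ((-3 - 3*εx - 3*εy + εx*εy)/4)*t^2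
      - ((-3 + 3*εx + 3*εy + εx*εy)/4)*t + 1 := by fun_prop
  have hiv := intermediate_value_Icc' (by norm_num : (-4:ℝ) ≤ 4) hcont.continuousOn
  have h1 : -(4:ℝ)^3 + ((-3 - 3*εx - 3*εy + εx*εy)/4)*4^2
      - ((-3 + 3*εx + 3*εy + εx*εy)/4)*4 + 1 ≤ 0 := by nlinarith
  have h2 : (0:ℝ) ≤ -(-4:ℝ)^3 + ((-3 - 3*εx - 3*εy + εx*εy)/4)*(-4)^2
      - ((-3 + 3*εx + 3*εy + εx*εy)/4)*(-4) + 1 := by nlinarith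
  obtain ⟨r, -, hroot⟩ := hiv (Set.mem_Icc.mpr ⟨h1, h2⟩)
  have hroot : -r^3 + ((-3 - 3*εx - 3*εy + εx*εy)/4)*r^2
      - ((-3 + 3*εx + 3*εy + εx*εy)/4)*r + 1 = 0 := hroot
  -- discriminant positivity
  have hE : (0:ℝ) < 3375 + 162*εy^2 - 81*εy^4 + 3024*εx*εy + 432*εx*εy^3 + 162*εx^2
      + 396*εx^2*εy^2 + 18*εx^2*εy^4 + 432*εx^3*εy + 80*εx^3*εy^3 - 81*εx^4
      + 18*εx^4*εy^2 - εx^4*εy^4 := by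
    have hid1 : (1+εx*εy)^2 * (3375 + 162*εy^2 - 81*εy^4 + 3024*εx*εy + 432*εx*εy^3
        + 162*εx^2 + 396*εx^2*εy^2 + 18*εx^2*εy^4 + 432*εx^3*εy + 80*εx^3*εy^3
        - 81*εx^4 + 18*εx^4*εy^2 - εx^4*εy^4)
        = (1-εx^2)*(1-εy^2)*(1+εx*εy)*(15-εx*εy)^3
          + 64*(εx+εy)^2*(1+εx*εy)*(54+9*(εx*εy)^2-(εx*εy)^3)
          + 81*(εx+εy)^2*(1-εx^2)*(1-εy^2)*(1+εx*εy)^2 := by ring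
    have a1 : (0:ℝ) < 1-εx^2 := by nlinarith
    have a2 : (0:ℝ) < 1-εy^2 := by nlinarith
    have a3 : (0:ℝ) < 1+εx*εy := by linarith
    have a4 : (0:ℝ) < (15-εx*εy)^3 := pow_pos (by linarith) 3
    have t1 : (0:ℝ) < (1-εx^2)*(1-εy^2)*(1+εx*εy)*(15-εx*εy)^3 :=
      mul_pos (mul_pos (mul_pos a1 a2) a3) a4
    have t2 : (0:ℝ) ≤ 64*(εx+εy)^2*(1+εx*εy)*(54+9*(εx*εy)^2-(εx*εy)^3) := by
      have : (0:ℝ) < 54+9*(εx*εy)^2-(εx*εy)^3 := by nlinarith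
      positivity
    have t3 : (0:ℝ) ≤ 81*(εx+εy)^2*(1-εx^2)*(1-εy^2)*(1+εx*εy)^2 := by positivity
    nlinarith [hid1, t1, t2, t3, sq_nonneg (1+εx*εy), mul_pos a3 a3]
  -- key inequality: the quadratic factor has negative discriminant
  have hG : (0:ℝ) < 4*(r^2 - ((-3 - 3*εx - 3*εy + εx*εy)/4)*r + (-3 + 3*εx + 3*εy + εx*εy)/4)
      - (r - (-3 - 3*εx - 3*εy + εx*εy)/4)^2 := by
    have hid2 : (r^2 + (r - (-3 - 3*εx - 3*εy + εx*εy)/4)*r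
          + (r^2 - ((-3 - 3*εx - 3*εy + εx*εy)/4)*r + (-3 + 3*εx + 3*εy + εx*εy)/4))^2
        * (4*(r^2 - ((-3 - 3*εx - 3*εy + εx*εy)/4)*r + (-3 + 3*εx + 3*εy + εx*εy)/4)
          - (r - (-3 - 3*εx - 3*εy + εx*εy)/4)^2) * 256
        = 3375 + 162*εy^2 - 81*εy^4 + 3024*εx*εy + 432*εx*εy^3 + 162*εx^2
          + 396*εx^2*εy^2 + 18*εx^2*εy^4 + 432*εx^3*εy + 80*εx^3*εy^3 - 81*εx^4
          + 18*εx^4*εy^2 - εx^4*εy^4 := by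
      linear_combination ((-3888) + 1296*εy + (-1296)*εy^2 + 432*εy^3 + 1296*εx
        + (-4752)*εx*εy + 432*εx*εy^2 + (-432)*εx*εy^3 + (-1296)*εx^2 + 432*εx^2*εy
        + (-432)*εx^2*εy^2 + 144*εx^2*εy^3 + 432*εx^3 + (-432)*εx^3*εy + 144*εx^3*εy^2
        + (-16)*εx^3*εy^3 + 5184*r + (-5184)*r*εy + (-5184)*r*εx + (-1728)*r*εx*εy
        + (-5184)*r^2 + (-5184)*r^2*εy + (-5184)*r^2*εx + 1728*r^2*εx*εy
        + (-6912)*r^3) * hroot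
    nlinarith [hid2, hE, sq_nonneg (r^2 + (r - (-3 - 3*εx - 3*εy + εx*εy)/4)*r
      + (r^2 - ((-3 - 3*εx - 3*εy + εx*εy)/4)*r + (-3 + 3*εx + 3*εy + εx*εy)/4))]
  constructor
  · -- unique real root
    refine ⟨r, hroot, ?_⟩
    intro t ht
    have hfac : (r - t)*(t^2 + (r - (-3 - 3*εx - 3*εy + εx*εy)/4)*t
        + (r^2 - ((-3 - 3*εx - 3*εy + εx*εy)/4)*r + (-3 + 3*εx + 3*εy + εx*εy)/4)) = 0 := by
      linear_combination ht - hroot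
    have hqpos : (0:ℝ) < t^2 + (r - (-3 - 3*εx - 3*εy + εx*εy)/4)*t
        + (r^2 - ((-3 - 3*εx - 3*εy + εx*εy)/4)*r + (-3 + 3*εx + 3*εy + εx*εy)/4) := by
      nlinarith [hG, sq_nonneg (2*t + (r - (-3 - 3*εx - 3*εy + εx*εy)/4))]
    rcases mul_eq_zero.mp hfac with h | h
    · linarith
    · exact absurd h hqpos.ne'
  · -- complex conjugate roots
    set sR : ℝ := Real.sqrt (4*(r^2 - ((-3 - 3*εx - 3*εy + εx*εy)/4)*r
        + (-3 + 3*εx + 3*εy + εx*εy)/4) - (r - (-3 - 3*εx - 3*εy + εx*εy)/4)^2) with hsRdef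
    have hsRpos : 0 < sR := Real.sqrt_pos.mpr hG
    have hs : sR^2 = 4*(r^2 - ((-3 - 3*εx - 3*εy + εx*εy)/4)*r
        + (-3 + 3*εx + 3*εy + εx*εy)/4) - (r - (-3 - 3*εx - 3*εy + εx*εy)/4)^2 :=
      Real.sq_sqrt hG.le
    have hsC : ((sR:ℂ))^2 = 4*((r:ℂ)^2 - ((-3 - 3*(εx:ℂ) - 3*(εy:ℂ) + (εx:ℂ)*(εy:ℂ))/4)*(r:ℂ)
        + (-3 + 3*(εx:ℂ) + 3*(εy:ℂ) + (εx:ℂ)*(εy:ℂ))/4)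
        - ((r:ℂ) - (-3 - 3*(εx:ℂ) - 3*(εy:ℂ) + (εx:ℂ)*(εy:ℂ))/4)^2 := by
      have h := congrArg (Complex.ofReal) hs
      push_cast at h
      linear_combination h
    have hrootC : -(r:ℂ)^3 + ((-3 - 3*(εx:ℂ) - 3*(εy:ℂ) + (εx:ℂ)*(εy:ℂ))/4)*(r:ℂ)^2
        - ((-3 + 3*(εx:ℂ) + 3*(εy:ℂ) + (εx:ℂ)*(εy:ℂ))/4)*(r:ℂ) + 1 = 0 := by
      have h := congrArg (Complex.ofReal) hroot
      push_cast at h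
      linear_combination h
    have main : ∀ w : ℂ, w^2 + ((r:ℂ) - (-3 - 3*(εx:ℂ) - 3*(εy:ℂ) + (εx:ℂ)*(εy:ℂ))/4)*w
        + ((r:ℂ)^2 - ((-3 - 3*(εx:ℂ) - 3*(εy:ℂ) + (εx:ℂ)*(εy:ℂ))/4)*(r:ℂ)
          + (-3 + 3*(εx:ℂ) + 3*(εy:ℂ) + (εx:ℂ)*(εy:ℂ))/4) = 0 →
        -w^3 + (((-3 - 3*εx - 3*εy + εx*εy)/4 : ℝ) : ℂ) * w^2
          - (((-3 + 3*εx + 3*εy + εx*εy)/4 : ℝ) : ℂ) * w + 1 = 0 := by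
      intro w hw
      push_cast
      linear_combination ((r:ℂ) - w) * hw + hrootC
    set z : ℂ := (↑(-(r - (-3 - 3*εx - 3*εy + εx*εy)/4)/2) : ℂ) + ↑(sR/2)*Complex.I with hzdef
    have hz : z^2 + ((r:ℂ) - (-3 - 3*(εx:ℂ) - 3*(εy:ℂ) + (εx:ℂ)*(εy:ℂ))/4)*z
        + ((r:ℂ)^2 - ((-3 - 3*(εx:ℂ) - 3*(εy:ℂ) + (εx:ℂ)*(εy:ℂ))/4)*(r:ℂ)
          + (-3 + 3*(εx:ℂ) + 3*(εy:ℂ) + (εx:ℂ)*(εy:ℂ))/4) = 0 := by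
      rw [hzdef]
      push_cast
      linear_combination (-(1:ℂ)/4) * hsC + ((sR:ℂ)/2)^2 * Complex.I_sq
    have hconj : (starRingEnd ℂ) z
        = (↑(-(r - (-3 - 3*εx - 3*εy + εx*εy)/4)/2) : ℂ) - ↑(sR/2)*Complex.I := by
      rw [hzdef]
      simp only [map_add, map_mul, Complex.conj_ofReal, Complex.conj_I]
      ring
    have hzc : (starRingEnd ℂ z)^2
        + ((r:ℂ) - (-3 - 3*(εx:ℂ) - 3*(εy:ℂ) + (εx:ℂ)*(εy:ℂ))/4)*(starRingEnd ℂ z)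
        + ((r:ℂ)^2 - ((-3 - 3*(εx:ℂ) - 3*(εy:ℂ) + (εx:ℂ)*(εy:ℂ))/4)*(r:ℂ)
          + (-3 + 3*(εx:ℂ) + 3*(εy:ℂ) + (εx:ℂ)*(εy:ℂ))/4) = 0 := by
      rw [hconj]
      push_cast
      linear_combination (-(1:ℂ)/4) * hsC + ((sR:ℂ)/2)^2 * Complex.I_sq
    refine ⟨z, ?_, main z hz, main _ hzc⟩
    have him : z.im = sR/2 := by
      rw [hzdef]
      simp
    rw [him]
    exact ne_of_gt (div_pos hsRpos two_pos)
end

section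
/- For all ε_x, ε_y ∈ (-1,1), Δ(ε_x, ε_y) < 0, where Δ(ε_x, ε_y) = 18·Tr·B - 4·Tr³ + Tr²·B² - 4·B³ - 27 with Tr = (-3 - 3ε_x - 3ε_y + ε_x ε_y)/4 and B = (-3 + 3ε_x + 3ε_y + ε_x ε_y)/4. -/
theorem stmt3 (εx εy : ℝ) (hx : εx ∈ Set.Ioo (-1 : ℝ) 1) (hy : εy ∈ Set.Ioo (-1 : ℝ) 1) :
    18 * ((-3 - 3*εx - 3*εy + εx*εy)/4) * ((-3 + 3*εx + 3*εy + εx*εy)/4)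
      - 4 * ((-3 - 3*εx - 3*εy + εx*εy)/4)^3
      + ((-3 - 3*εx - 3*εy + εx*εy)/4)^2 * ((-3 + 3*εx + 3*εy + εx*εy)/4)^2
      - 4 * ((-3 + 3*εx + 3*εy + εx*εy)/4)^3 - 27 < 0 := by
  obtain ⟨hx1, hx2⟩ := hx
  obtain ⟨hy1, hy2⟩ := hy
  have ha : (0:ℝ) < (1-εx)*(1+εy) := mul_pos (by linarith) (by linarith)
  have hb : (0:ℝ) < (1+εx)*(1-εy) := mul_pos (by linarith) (by linarith)
  have hc : (0:ℝ) < (1-εx)*(1-εy) := mul_pos (by linarith) (by linarith)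
  have hd : (0:ℝ) < (1+εx)*(1+εy) := mul_pos (by linarith) (by linarith)
  nlinarith [mul_pos ha hb, mul_pos hc hd, mul_pos ha hc, mul_pos ha hd, mul_pos hb hc, mul_pos hb hd, mul_pos (mul_pos ha hb) (mul_pos hc hd), sq_nonneg (εx+εy), sq_nonneg (εx-εy), sq_nonneg (εx*εy+1), mul_nonneg (mul_pos ha hb).le (sq_nonneg (εx+εy)), mul_nonneg (mul_pos hc hd).le (sq_nonneg (εx+εy))]
end

section
/- Let λ₁ > 0 be real, α < 0 and β real with λ₁(α² + β²) = 1 and 2α(λ₁ - 1) + (α² + β²) - λ₁ = (3/2)(ε_x + ε_y). If ε_x + ε_y > 0 then λ₁ ≤ 1 (so λ₁ is not the maximal-modulus root); if ε_x + ε_y < 0 then λ₁ ≥ 1 (so λ₁ is the maximal-modulus root). -/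
theorem stmt7 (lam α β εx εy : ℝ) (hlam : lam > 0) (hα : α < 0)
    (hdet : lam * (α^2 + β^2) = 1)
    (hrel : 2*α*(lam - 1) + (α^2 + β^2) - lam = (3/2) * (εx + εy)) :
    (εx + εy > 0 → lam ≤ 1) ∧ (εx + εy < 0 → lam ≥ 1) := by
  constructor
  · intro hs
    by_contra h
    push_neg at h
    nlinarith [mul_neg_of_pos_of_neg hlam (mul_neg_of_neg_of_pos hα (by linarith : (0:ℝ) < lam - 1)), sq_nonneg β, mul_pos hlam hlam]
  · intro hs
    by_contra h
    push_neg at h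
    nlinarith [mul_pos hlam (mul_pos_of_neg_of_neg hα (by linarith : lam - 1 < 0)), sq_nonneg β, mul_pos hlam hlam]
end

section
/- Let ε_x, ε_y ∈ (-1,1), and let M be the 3×3 matrix [[(-1-3ε_x-ε_y+ε_x ε_y)/4, (1-ε_x)/2, 1], [(3+ε_y²)/4, -(1+ε_y)/2, 0], [(1-ε_y)/2, 1, 0]]. If λ₁ > 1 is a real eigenvalue of M, then the vector w = (λ₁ + (1+ε_y)/2, (3+ε_y²)/4, λ₁² - Tr(M)λ₁ + B(M) + (1-ε_y)/2) is an eigenvector of M for λ₁ and all three coordinates of w are strictly positive. -/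
theorem stmt9 (εx εy lam : ℝ) (hx : εx ∈ Set.Ioo (-1 : ℝ) 1) (hy : εy ∈ Set.Ioo (-1 : ℝ) 1)
    (hlam : lam > 1)
    (M : Matrix (Fin 3) (Fin 3) ℝ)
    (hM : M = !![(-1 - 3*εx - εy + εx*εy)/4, (1 - εx)/2, 1;
                 (3 + εy^2)/4, -(1 + εy)/2, 0;
                 (1 - εy)/2, 1, 0])
    (heig : ∃ v : Fin 3 → ℝ, v ≠ 0 ∧ M.mulVec v = lam • v) :
    let trM : ℝ := (-3 - 3*εx - 3*εy + εx*εy)/4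
    let BM : ℝ := (-3 + 3*εx + 3*εy + εx*εy)/4
    let w : Fin 3 → ℝ := ![lam + (1 + εy)/2, (3 + εy^2)/4,
      lam^2 - trM * lam + BM + (1 - εy)/2]
    M.mulVec w = lam • w ∧ 0 < w 0 ∧ 0 < w 1 ∧ 0 < w 2 := by
  obtain ⟨hx1, hx2⟩ := hx
  obtain ⟨hy1, hy2⟩ := hy
  obtain ⟨v, hv, hvM⟩ := heig
  have hA : (M - lam • (1 : Matrix (Fin 3) (Fin 3) ℝ)).mulVec v = 0 := by
    rw [Matrix.sub_mulVec, hvM, Matrix.smul_mulVec, Matrix.one_mulVec, sub_self]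
  have hdet : (M - lam • (1 : Matrix (Fin 3) (Fin 3) ℝ)).det = 0 :=
    Matrix.exists_mulVec_eq_zero_iff.mp ⟨v, hv, hA⟩
  subst hM
  have key : lam^3 - ((-3 - 3*εx - 3*εy + εx*εy)/4) * lam^2
      + ((-3 + 3*εx + 3*εy + εx*εy)/4) * lam - 1 = 0 := by
    simp [Matrix.det_fin_three, Matrix.one_apply, Matrix.vecHead, Matrix.vecTail] at hdet
    linear_combination -hdet
  have hlam0 : (0:ℝ) < lam := by linarith
  intro trM BM w
  have hw0 : w 0 = lam + (1 + εy)/2 := rfl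
  have hw1 : w 1 = (3 + εy^2)/4 := rfl
  have hw2 : w 2 = lam^2 - ((-3 - 3*εx - 3*εy + εx*εy)/4) * lam
      + ((-3 + 3*εx + 3*εy + εx*εy)/4) + (1 - εy)/2 := rfl
  have hw2pos : 0 < w 2 := by
    have hmul : lam * w 2 = 1 + (1 - εy)/2 * lam := by
      rw [hw2]; linear_combination key
    by_contra h
    push_neg at h
    nlinarith
  refine ⟨?_, by rw [hw0]; linarith, by rw [hw1]; nlinarith, hw2pos⟩
  funext i
  fin_cases i
  · show _ = lam * w 0
    rw [hw0]
    simp [Matrix.mulVec, dotProduct, Fin.sum_univ_three, hw0, hw1, hw2,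
      show ((0:Fin 3) : Fin 3) = 0 from rfl]
    ring
  · show _ = lam * w 1
    rw [hw1]
    simp [Matrix.mulVec, dotProduct, Fin.sum_univ_three, hw0, hw1, hw2]
    ring
  · show _ = lam * w 2
    rw [hw2]
    simp [Matrix.mulVec, dotProduct, Fin.sum_univ_three, hw0, hw1, hw2]
    linear_combination -key
end

section
/- With F_index defined as: +∞ if all coordinates are ≥ 0; -∞ if all are ≤ 0; 0 if the coordinate sum is 0; sum/max if max > 0 and sum < 0; -sum/min if min < 0 and sum > 0; one has for all ε_x, ε_y ∈ (-1,1): F_index((-1-3ε_x-ε_y+ε_x ε_y)/4, (1-ε_x)/2, 1) = +∞ if -1-3ε_x-ε_y+ε_x ε_y > 0, and = (5-ε_y)(1-ε_x)/(1+3ε_x+ε_y-ε_x ε_y) if -1-3ε_x-ε_y+ε_x ε_y < 0. -/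
noncomputable def Findex (a1 a2 a3 : ℝ) : EReal :=
  if 0 ≤ min a1 (min a2 a3) then ⊤
  else if max a1 (max a2 a3) ≤ 0 then ⊥
  else if a1 + a2 + a3 = 0 then 0
  else if a1 + a2 + a3 < 0 then (((a1 + a2 + a3) / max a1 (max a2 a3) : ℝ) : EReal)
  else ((-(a1 + a2 + a3) / min a1 (min a2 a3) : ℝ) : EReal)

theorem stmt12 (εx εy : ℝ) (hx : εx ∈ Set.Ioo (-1 : ℝ) 1) (hy : εy ∈ Set.Ioo (-1 : ℝ) 1) :
    (-1 - 3*εx - εy + εx*εy > 0 →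
      Findex ((-1 - 3*εx - εy + εx*εy)/4) ((1 - εx)/2) 1 = ⊤) ∧
    (-1 - 3*εx - εy + εx*εy < 0 →
      Findex ((-1 - 3*εx - εy + εx*εy)/4) ((1 - εx)/2) 1
        = (((5 - εy)*(1 - εx)/(1 + 3*εx + εy - εx*εy) : ℝ) : EReal)) := by
  obtain ⟨hx1, hx2⟩ := hx
  obtain ⟨hy1, hy2⟩ := hy
  constructor
  · intro h
    unfold Findex
    rw [if_pos]
    simp only [le_min_iff]
    refine ⟨by linarith, by linarith, by linarith⟩
  · intro h
    have hA : (-1 - 3*εx - εy + εx*εy)/4 < 0 := by linarith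
    have ha2 : (0:ℝ) < (1 - εx)/2 := by linarith
    have hmin : min ((-1 - 3*εx - εy + εx*εy)/4) (min ((1 - εx)/2) 1)
        = (-1 - 3*εx - εy + εx*εy)/4 := by
      rw [min_eq_left]
      exact le_trans hA.le (le_min ha2.le one_pos.le)
    have hsum : (-1 - 3*εx - εy + εx*εy)/4 + (1 - εx)/2 + 1
        = (5 - εy)*(1 - εx)/4 := by ring
    have hsumpos : (0:ℝ) < (5 - εy)*(1 - εx)/4 := by
      have : (0:ℝ) < (5 - εy)*(1 - εx) := by nlinarith
      linarith
    unfold Findex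
    rw [if_neg (by rw [hmin]; linarith),
        if_neg (by
          intro hc
          have := le_trans (le_max_of_le_right (le_max_right ((1 - εx)/2) 1)) hc
          linarith),
        if_neg (by rw [hsum]; linarith),
        if_neg (by rw [hsum]; linarith), hmin, hsum]
    norm_cast
    have hd : -1 - 3*εx - εy + εx*εy ≠ 0 := ne_of_lt h
    have hd2 : 1 + 3*εx + εy - εx*εy ≠ 0 := by intro hc; apply hd; linarith
    field_simp
    have e : ∀ A B : ℝ, A = -B → -((5 - εy) / A) = (5 - εy) / B := by
      intro A B hAB; subst hAB; rw [div_neg, neg_neg]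
    apply e
    simp only [Int.cast_negSucc]; push_cast; ring
end

section
/- For ε_x, ε_y ∈ (-1,1) with ε_x + ε_y > 0, ε_x < ε_y, and (5-ε_x)ε_y² + (ε_x²+10ε_x+1)ε_y - (1-ε_x)(4+5ε_x) > 0, one has (-4 + ε_x + (3-ε_x)ε_y + ε_y²)/((1-ε_x)(1+ε_y)) < 0 and min{(ε_y-ε_x)/(1-ε_y), (1+2ε_x+ε_y²)/(2(1-ε_x))} > 0. -/
theorem stmt14 (εx εy : ℝ) (hx : εx ∈ Set.Ioo (-1 : ℝ) 1) (hy : εy ∈ Set.Ioo (-1 : ℝ) 1)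
    (hsum : εx + εy > 0) (hlt : εx < εy)
    (hb : (5 - εx)*εy^2 + (εx^2 + 10*εx + 1)*εy - (1 - εx)*(4 + 5*εx) > 0) :
    (-4 + εx + (3 - εx)*εy + εy^2)/((1 - εx)*(1 + εy)) < 0 ∧
    0 < min ((εy - εx)/(1 - εy)) ((1 + 2*εx + εy^2)/(2*(1 - εx))) := by
  obtain ⟨hx1, hx2⟩ := hx
  obtain ⟨hy1, hy2⟩ := hy
  constructor
  · apply div_neg_of_neg_of_pos
    · nlinarith [sq_nonneg (1 - εy)]
    · nlinarith
  · rw [lt_min_iff]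
    constructor
    · apply div_pos <;> nlinarith
    · apply div_pos <;> nlinarith [sq_nonneg (1 - εy)]
end

section
/- For all ε_x, ε_y ∈ (-1,1) with ε_x + ε_y < 0, the cubic p(λ) = -λ³ + Tr·λ² - B·λ + 1, with Tr = (-3-3ε_x-3ε_y+ε_x ε_y)/4 and B = (-3+3ε_x+3ε_y+ε_x ε_y)/4, has a real root λ₁ > 1 which is strictly greater in absolute value than the other two (complex conjugate) roots. -/
set_option maxHeartbeats 2000000 in
theorem stmt18 (εx εy : ℝ) (hx : εx ∈ Set.Ioo (-1 : ℝ) 1) (hy : εy ∈ Set.Ioo (-1 : ℝ) 1)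
    (hsum : εx + εy < 0) :
    ∃ lam : ℝ, lam > 1 ∧
      -lam^3 + ((-3 - 3*εx - 3*εy + εx*εy)/4) * lam^2
        - ((-3 + 3*εx + 3*εy + εx*εy)/4) * lam + 1 = 0 ∧
      ∀ z : ℂ, -z^3 + (((-3 - 3*εx - 3*εy + εx*εy)/4 : ℝ) : ℂ) * z^2
          - (((-3 + 3*εx + 3*εy + εx*εy)/4 : ℝ) : ℂ) * z + 1 = 0 →
        z ≠ (lam : ℂ) → ‖z‖ < lam := by
  obtain ⟨hx1, hx2⟩ := hx
  obtain ⟨hy1, hy2⟩ := hy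
  set T : ℝ := (-3 - 3*εx - 3*εy + εx*εy)/4 with hT
  set B : ℝ := (-3 + 3*εx + 3*εy + εx*εy)/4 with hB
  clear_value T B
  have hp : -1 < εx*εy := by nlinarith
  have hTB : 0 < T + B + 2 := by rw [hT, hB]; linarith
  set S : Set ℝ := {x : ℝ | x^3 - T*x^2 + B*x - 1 = 0} with hS
  clear_value S
  have hmemS : ∀ x : ℝ, x ∈ S ↔ x^3 - T*x^2 + B*x - 1 = 0 := by
    intro x; rw [hS]; exact Iff.rfl
  have hcont : Continuous fun x : ℝ => x^3 - T*x^2 + B*x - 1 := by continuity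
  have hclosed : IsClosed S := by
    rw [hS]; exact isClosed_eq hcont continuous_const
  set M : ℝ := |T| + |B| + 2 with hM
  clear_value M
  have hM2 : (2:ℝ) ≤ M := by
    have := abs_nonneg T; have := abs_nonneg B; rw [hM]; linarith
  have hq1 : (1:ℝ)^3 - T*1^2 + B*1 - 1 < 0 := by
    rw [hT, hB]; nlinarith
  have hqM : (0:ℝ) < M^3 - T*M^2 + B*M - 1 := by
    nlinarith [le_abs_self T, neg_abs_le T, le_abs_self B, neg_abs_le B,
      abs_nonneg T, abs_nonneg B, sq_nonneg M, hM]
  have hbdd : BddAbove S := by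
    refine ⟨M, fun x hxS => ?_⟩
    by_contra h
    push_neg at h
    have hx0 : x^3 - T*x^2 + B*x - 1 = 0 := (hmemS x).mp hxS
    nlinarith [le_abs_self T, neg_abs_le T, le_abs_self B, neg_abs_le B,
      abs_nonneg T, abs_nonneg B, sq_nonneg x, hM]
  obtain ⟨x0, hx0mem, hx0⟩ :=
    intermediate_value_Icc (show (1:ℝ) ≤ M by linarith) hcont.continuousOn
      (Set.mem_Icc.mpr ⟨le_of_lt hq1, le_of_lt hqM⟩)
  have hx0S : x0 ∈ S := (hmemS x0).mpr hx0
  have hx0gt1 : 1 < x0 := by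
    rcases lt_or_eq_of_le hx0mem.1 with h | h
    · exact h
    · exfalso; rw [← h] at hx0; simp at hx0; linarith
  have hne : S.Nonempty := ⟨x0, hx0S⟩
  set u : ℝ := sSup S with hu
  have huS : u ∈ S := hclosed.csSup_mem hne hbdd
  have hu1 : 1 < u := lt_of_lt_of_le hx0gt1 (le_csSup hbdd hx0S)
  have hle_u : ∀ x ∈ S, x ≤ u := fun x hx => le_csSup hbdd hx
  clear_value u
  have hqu : u^3 - T*u^2 + B*u - 1 = 0 := (hmemS u).mp huS
  set c : ℝ := u^2 - T*u + B with hcdef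
  clear_value c
  have hc : u * c = 1 := by rw [hcdef]; linear_combination hqu
  refine ⟨u, hu1, by linarith, ?_⟩
  intro z hz hzne
  have huC : (u:ℂ)^3 - (T:ℂ)*(u:ℂ)^2 + (B:ℂ)*(u:ℂ) - 1 = 0 := by
    exact_mod_cast congrArg (fun t : ℝ => (t:ℂ)) hqu
  have hcC : (c:ℂ) = (u:ℂ)^2 - (T:ℂ)*(u:ℂ) + (B:ℂ) := by
    exact_mod_cast congrArg (fun t : ℝ => (t:ℂ)) hcdef
  have hucC : (u:ℂ) * (c:ℂ) = 1 := by
    exact_mod_cast congrArg (fun t : ℝ => (t:ℂ)) hc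
  have hfac : (z - (u:ℂ)) * (z^2 + ((u:ℂ) - (T:ℂ))*z + (c:ℂ)) = 0 := by
    linear_combination (-1 : ℂ) * hz + z * hcC - hucC
  have hq2 : z^2 + ((u:ℂ) - (T:ℂ))*z + (c:ℂ) = 0 := by
    rcases mul_eq_zero.mp hfac with h | h
    · exact absurd h (sub_ne_zero.mpr hzne)
    · exact h
  by_cases him : z.im = 0
  · -- real root case
    have hzre : z = (z.re : ℂ) := by
      apply Complex.ext <;> simp [him]
    set x := z.re with hxdef
    clear_value x
    have hq2' : x^2 + (u - T)*x + c = 0 := by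
      have h := hq2
      rw [hzre] at h
      exact_mod_cast h
    have hqxS : x ∈ S := by
      rw [hmemS x]
      linear_combination (x - u) * hq2' - x * hcdef + hc
    have hxne : x ≠ u := by
      intro h
      exact hzne (by rw [hzre, h])
    have hxlt : x < u := lt_of_le_of_ne (hle_u x hqxS) hxne
    have hxgt : -u < x := by
      by_contra h
      push_neg at h
      have hG : (T+B+2)*(u*(-x)) + ((-x - u)*(u*(-x) - 1)) + (u*(-x) - 1)^2 = 0 := by
        linear_combination (u + u^2) * hq2' - (1 + x + u) * hc + (u*x) * hcdef
      have huu : 1 < u * u := lt_of_lt_of_le hu1 (le_mul_of_one_le_left (by linarith) hu1.le)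
      have hux : u * u ≤ u * (-x) := by
        apply mul_le_mul_of_nonneg_left (by linarith) (by linarith)
      have h1 : (0:ℝ) < (T+B+2)*(u*(-x)) := mul_pos hTB (by linarith)
      have h2 : (0:ℝ) ≤ (-x - u)*(u*(-x) - 1) :=
        mul_nonneg (by linarith) (by linarith)
      linarith [hG, h1, h2, sq_nonneg (u*(-x) - 1)]
    have habs : |x| < u := abs_lt.mpr ⟨hxgt, hxlt⟩
    rw [hzre]
    simpa using habs
  · -- complex root case
    have hconj : (starRingEnd ℂ z)^2 + ((u:ℂ) - (T:ℂ))*(starRingEnd ℂ z) + (c:ℂ) = 0 := by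
      have h := congrArg (starRingEnd ℂ) hq2
      simpa [map_add, map_mul, map_pow, Complex.conj_ofReal] using h
    have hzne2 : z - starRingEnd ℂ z ≠ 0 := by
      intro h
      have h2 : z = starRingEnd ℂ z := sub_eq_zero.mp h
      exact him (Complex.conj_eq_iff_im.mp h2.symm)
    have hdiff : (z - starRingEnd ℂ z) * (z + starRingEnd ℂ z + ((u:ℂ) - (T:ℂ))) = 0 := by
      linear_combination hq2 - hconj
    have hsum2 : z + starRingEnd ℂ z = -((u:ℂ) - (T:ℂ)) := by
      rcases mul_eq_zero.mp hdiff with h | h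
      · exact absurd h hzne2
      · linear_combination h
    have hprod : z * starRingEnd ℂ z = (c:ℂ) := by
      linear_combination (-1 : ℂ) * hq2 + z * hsum2
    have hnsq : Complex.normSq z = c := by
      have h : ((Complex.normSq z : ℝ) : ℂ) = (c : ℂ) := by
        rw [← Complex.mul_conj]; exact hprod
      exact_mod_cast h
    have hcpos : 0 < c := by nlinarith
    have hclt : c < 1 := by nlinarith
    have hsq : (‖z‖)^2 = c := by rw [Complex.sq_norm, hnsq]
    nlinarith [norm_nonneg z, hsq, hu1, hclt, sq_nonneg (‖z‖ - 1)]
end
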